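/- Monotonicity of S-fraction coefficients: Let α and α' be sequences of real numbers with 0 ≤ α_i ≤ α'_i for all i ≥ 0, and let f = Σ a_n t^n and f' = Σ a'_n t^n be the formal power series represented by the S-fractions with coefficients α and α' respectively. Then 0 ≤ a_n ≤ a'_n for all n ≥ 0. -/

import Mathlib

open PowerSeries

/-- A formal power series `f ∈ ℝ⟦t⟧` is represented by the S-fraction with
coefficients `α`. -/
def IsSFractionOf (α : ℕ → ℝ) (f : PowerSeries ℝ) : Prop :=
  ∃ F : ℕ → PowerSeries ℝ,
    (∀ k, F k * (1 - PowerSeries.C (α (k + 1)) * PowerSeries.X * F (k + 1)) = 1) ∧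
    f = PowerSeries.C (α 0) * F 0

lemma sfrac_coeff_zero (α : ℕ → ℝ) (F : ℕ → PowerSeries ℝ)
    (hF : ∀ k, F k * (1 - PowerSeries.C (α (k + 1)) * PowerSeries.X * F (k + 1)) = 1)
    (k : ℕ) : PowerSeries.coeff 0 (F k) = 1 := by
  have := congrArg (PowerSeries.constantCoeff) (hF k)
  simpa using this

lemma sfrac_coeff_succ (α : ℕ → ℝ) (F : ℕ → PowerSeries ℝ)
    (hF : ∀ k, F k * (1 - PowerSeries.C (α (k + 1)) * PowerSeries.X * F (k + 1)) = 1)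
    (k n : ℕ) :
    PowerSeries.coeff (n + 1) (F k) =
      α (k + 1) * PowerSeries.coeff n (F (k + 1) * F k) := by
  have h : F k = 1 + PowerSeries.C (α (k + 1)) *
      (PowerSeries.X * (F (k + 1) * F k)) := by
    linear_combination hF k
  conv_lhs => rw [h]
  simp [PowerSeries.coeff_succ_X_mul]

theorem sfraction_coeff_monotone (α α' : ℕ → ℝ)
    (hα : ∀ i, 0 ≤ α i) (hαα' : ∀ i, α i ≤ α' i)
    (f f' : PowerSeries ℝ)
    (hf : IsSFractionOf α f) (hf' : IsSFractionOf α' f') :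
    ∀ n : ℕ, 0 ≤ PowerSeries.coeff n f ∧
      PowerSeries.coeff n f ≤ PowerSeries.coeff n f' := by
  obtain ⟨F, hF, hf0⟩ := hf
  obtain ⟨F', hF', hf0'⟩ := hf'
  have key : ∀ n : ℕ, ∀ k : ℕ, 0 ≤ PowerSeries.coeff n (F k) ∧
      PowerSeries.coeff n (F k) ≤ PowerSeries.coeff n (F' k) := by
    intro n
    induction n using Nat.strong_induction_on with
    | _ n ih =>
      intro k
      match n with
      | 0 =>
        rw [sfrac_coeff_zero α F hF k, sfrac_coeff_zero α' F' hF' k]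
        norm_num
      | Nat.succ m =>
        rw [sfrac_coeff_succ α F hF k m, sfrac_coeff_succ α' F' hF' k m,
          PowerSeries.coeff_mul, PowerSeries.coeff_mul]
        have hterm : ∀ p ∈ Finset.HasAntidiagonal.antidiagonal m,
            0 ≤ PowerSeries.coeff p.1 (F (k+1)) * PowerSeries.coeff p.2 (F k) ∧
            PowerSeries.coeff p.1 (F (k+1)) * PowerSeries.coeff p.2 (F k) ≤
              PowerSeries.coeff p.1 (F' (k+1)) * PowerSeries.coeff p.2 (F' k) := by
          intro p hp
          rw [Finset.HasAntidiagonal.mem_antidiagonal] at hp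
          have h1 := ih p.1 (by omega) (k+1)
          have h2 := ih p.2 (by omega) k
          exact ⟨mul_nonneg h1.1 h2.1,
            mul_le_mul h1.2 h2.2 h2.1 (le_trans h1.1 h1.2)⟩
        have hsum0 : 0 ≤ ∑ p ∈ Finset.HasAntidiagonal.antidiagonal m,
            PowerSeries.coeff p.1 (F (k+1)) * PowerSeries.coeff p.2 (F k) :=
          Finset.sum_nonneg fun p hp => (hterm p hp).1
        have hsumle : ∑ p ∈ Finset.HasAntidiagonal.antidiagonal m,
            PowerSeries.coeff p.1 (F (k+1)) * PowerSeries.coeff p.2 (F k) ≤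
            ∑ p ∈ Finset.HasAntidiagonal.antidiagonal m,
            PowerSeries.coeff p.1 (F' (k+1)) * PowerSeries.coeff p.2 (F' k) :=
          Finset.sum_le_sum fun p hp => (hterm p hp).2
        constructor
        · exact mul_nonneg (hα (k+1)) hsum0
        · exact mul_le_mul (hαα' (k+1)) hsumle hsum0
            (le_trans (hα (k+1)) (hαα' (k+1)))
  intro n
  rw [hf0, hf0', PowerSeries.coeff_C_mul, PowerSeries.coeff_C_mul]
  have h := key n 0
  exact ⟨mul_nonneg (hα 0) h.1,
    mul_le_mul (hαα' 0) h.2 h.1 (le_trans (hα 0) (hαα' 0))⟩
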